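/- Uniqueness in the Schrödinger system: let X, Y be Polish spaces, μ, ν probability measures, f : X × Y → (0,∞) Borel with ∫ f d(μ⊗ν) = 1. If (φ, ψ) and (φ', ψ') are two pairs of positive Borel functions each solving ∫_Y f(x,y)ψ(y) ν(dy) = φ(x)^{-1} μ-a.e. and ∫_X f(x,y)φ(x) μ(dx) = ψ(y)^{-1} ν-a.e. (and similarly for (φ', ψ')), then there exists a constant a > 0 such that φ' = aφ μ-a.e. and ψ' = a^{-1}ψ ν-a.e. -/

import Mathlib

open MeasureTheory Set ENNReal

private lemma cancel_mid (a b c : ℝ≥0∞) (h0 : b ≠ 0) (ht : b ≠ ⊤) :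
    a * b⁻¹ * (b * c) = a * c := by
  rw [mul_assoc, ← mul_assoc b⁻¹, ENNReal.inv_mul_cancel h0 ht, one_mul]

private lemma hdiv_iff {a b c d : ℝ≥0∞} (hb0 : b ≠ 0) (hbt : b ≠ ⊤) (hd0 : d ≠ 0)
    (hdt : d ≠ ⊤) : a * b⁻¹ ≤ c * d⁻¹ ↔ a * d ≤ c * b := by
  rw [← ENNReal.mul_le_mul_iff_left (c := b * d) (mul_ne_zero hb0 hd0) (mul_ne_top hbt hdt),
    cancel_mid a b d hb0 hbt, mul_comm b d, cancel_mid c d b hd0 hdt]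

private lemma rearr {A B p q : ℝ≥0∞} (hA : A ≠ ⊤) (hB : B ≠ ⊤) (hp : p ≠ ⊤) (hq : q ≠ ⊤)
    (hAB : A ≤ B) (hqp : q ≤ p) :
    A * p + B * q ≤ A * q + B * p ∧ (A * q + B * p ≤ A * p + B * q → A = B ∨ p = q) := by
  obtain ⟨d, rfl⟩ : ∃ d, B = d + A := ⟨B - A, (tsub_add_cancel_of_le hAB).symm⟩
  obtain ⟨e, rfl⟩ : ∃ e, p = e + q := ⟨p - q, (tsub_add_cancel_of_le hqp).symm⟩
  have hkey : A * q + (d + A) * (e + q) = A * (e + q) + (d + A) * q + d * e := by ring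
  constructor
  · rw [hkey]; exact le_self_add
  · intro h
    rw [hkey] at h
    have hfin : A * (e + q) + (d + A) * q ≠ ⊤ :=
      add_ne_top.mpr ⟨mul_ne_top hA hp, mul_ne_top hB hq⟩
    have h' : A * (e + q) + (d + A) * q + d * e ≤ A * (e + q) + (d + A) * q + 0 := by
      simpa using h
    have h0 : d * e = 0 :=
      le_antisymm ((ENNReal.add_le_add_iff_left hfin).mp h') zero_le
    rcases mul_eq_zero.mp h0 with h | h
    · exact Or.inl (by simp [h])
    · exact Or.inr (by simp [h])

private lemma uv_eq {u v : ℝ≥0∞} (hu : u ≤ 1) (hv : v ≤ 1)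
    (h : u + (1 - v) = v + (1 - u)) : u = v := by
  have h2' : u + (1 - v) + (v + u) = v + (1 - u) + (v + u) := by rw [h]
  have e1 : u + (1 - v) + (v + u) = u + u + ((1 - v) + v) := by ring
  have e2 : v + (1 - u) + (v + u) = v + v + ((1 - u) + u) := by ring
  rw [e1, e2, tsub_add_cancel_of_le hv, tsub_add_cancel_of_le hu] at h2'
  have h3 : u + u = v + v := (ENNReal.add_left_inj one_ne_top).mp h2'
  rcases lt_trichotomy u v with hlt | he | hlt
  · exact absurd h3 (ne_of_lt (ENNReal.add_lt_add hlt hlt))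
  · exact he
  · exact absurd h3.symm (ne_of_lt (ENNReal.add_lt_add hlt hlt))

/-- Uniqueness in the Schrödinger system: any two positive solutions (φ, ψ) and
(φ', ψ') of the Schrödinger system for the same f, μ, ν coincide up to a positive
multiplicative constant a: φ' = aφ μ-a.e. and ψ' = a⁻¹ψ ν-a.e. -/
theorem schroedinger_system_uniqueness
    {X Y : Type*} [MetricSpace X] [TopologicalSpace.SeparableSpace X] [CompleteSpace X]
    [MeasurableSpace X] [BorelSpace X]
    [MetricSpace Y] [TopologicalSpace.SeparableSpace Y] [CompleteSpace Y]
    [MeasurableSpace Y] [BorelSpace Y]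
    (μ : Measure X) [IsProbabilityMeasure μ] (ν : Measure Y) [IsProbabilityMeasure ν]
    (f : X × Y → ℝ≥0∞) (hf : Measurable f) (hfpos : ∀ z, 0 < f z ∧ f z ≠ ⊤)
    (hfint : ∫⁻ z, f z ∂(μ.prod ν) = 1)
    (φ φ' : X → ℝ≥0∞) (ψ ψ' : Y → ℝ≥0∞)
    (hφ : Measurable φ) (hψ : Measurable ψ) (hφ' : Measurable φ') (hψ' : Measurable ψ')
    (hφpos : ∀ x, 0 < φ x ∧ φ x ≠ ⊤) (hψpos : ∀ y, 0 < ψ y ∧ ψ y ≠ ⊤)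
    (hφ'pos : ∀ x, 0 < φ' x ∧ φ' x ≠ ⊤) (hψ'pos : ∀ y, 0 < ψ' y ∧ ψ' y ≠ ⊤)
    (hsys₁ : ∀ᵐ x ∂μ, ∫⁻ y, f (x, y) * ψ y ∂ν = (φ x)⁻¹)
    (hsys₂ : ∀ᵐ y ∂ν, ∫⁻ x, f (x, y) * φ x ∂μ = (ψ y)⁻¹)
    (hsys₁' : ∀ᵐ x ∂μ, ∫⁻ y, f (x, y) * ψ' y ∂ν = (φ' x)⁻¹)
    (hsys₂' : ∀ᵐ y ∂ν, ∫⁻ x, f (x, y) * φ' x ∂μ = (ψ' y)⁻¹) :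
    ∃ a : ℝ≥0∞, 0 < a ∧ a ≠ ⊤ ∧
      (∀ᵐ x ∂μ, φ' x = a * φ x) ∧ (∀ᵐ y ∂ν, ψ' y = a⁻¹ * ψ y) := by
  -- positivity and finiteness repackaging
  have hfne : ∀ z, f z ≠ 0 := fun z => (hfpos z).1.ne'
  have hfnt : ∀ z, f z ≠ ⊤ := fun z => (hfpos z).2
  have hφ0 : ∀ x, φ x ≠ 0 := fun x => (hφpos x).1.ne'
  have hφt : ∀ x, φ x ≠ ⊤ := fun x => (hφpos x).2
  have hψ0 : ∀ y, ψ y ≠ 0 := fun y => (hψpos y).1.ne'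
  have hψt : ∀ y, ψ y ≠ ⊤ := fun y => (hψpos y).2
  have hφ'0 : ∀ x, φ' x ≠ 0 := fun x => (hφ'pos x).1.ne'
  have hφ't : ∀ x, φ' x ≠ ⊤ := fun x => (hφ'pos x).2
  have hψ'0 : ∀ y, ψ' y ≠ 0 := fun y => (hψ'pos y).1.ne'
  have hψ't : ∀ y, ψ' y ≠ ⊤ := fun y => (hψ'pos y).2
  -- the ratio functions
  set s : X → ℝ≥0∞ := fun x => φ' x * (φ x)⁻¹ with hs_def
  set t : Y → ℝ≥0∞ := fun y => ψ y * (ψ' y)⁻¹ with ht_def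
  have hs0 : ∀ x, s x ≠ 0 := fun x => mul_ne_zero (hφ'0 x) (ENNReal.inv_ne_zero.mpr (hφt x))
  have hsT : ∀ x, s x ≠ ⊤ := fun x => mul_ne_top (hφ't x) (inv_ne_top.mpr (hφ0 x))
  have ht0 : ∀ y, t y ≠ 0 := fun y => mul_ne_zero (hψ0 y) (ENNReal.inv_ne_zero.mpr (hψ't y))
  have htT : ∀ y, t y ≠ ⊤ := fun y => mul_ne_top (hψt y) (inv_ne_top.mpr (hψ'0 y))
  have hs_m : Measurable s := hφ'.mul hφ.inv
  have ht_m : Measurable t := hψ.mul hψ'.inv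
  -- bounded versions
  set u : X → ℝ≥0∞ := fun x => s x * (1 + s x)⁻¹ with hu_def
  set v : Y → ℝ≥0∞ := fun y => t y * (1 + t y)⁻¹ with hv_def
  have h1s0 : ∀ x, (1 : ℝ≥0∞) + s x ≠ 0 := fun x => by simp
  have h1sT : ∀ x, (1 : ℝ≥0∞) + s x ≠ ⊤ := fun x => add_ne_top.mpr ⟨one_ne_top, hsT x⟩
  have h1t0 : ∀ y, (1 : ℝ≥0∞) + t y ≠ 0 := fun y => by simp
  have h1tT : ∀ y, (1 : ℝ≥0∞) + t y ≠ ⊤ := fun y => add_ne_top.mpr ⟨one_ne_top, htT y⟩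
  have hu1 : ∀ x, u x ≤ 1 := fun x => by
    calc s x * (1 + s x)⁻¹ ≤ (1 + s x) * (1 + s x)⁻¹ := mul_le_mul_left le_add_self _
      _ = 1 := ENNReal.mul_inv_cancel (h1s0 x) (h1sT x)
  have hv1 : ∀ y, v y ≤ 1 := fun y => by
    calc t y * (1 + t y)⁻¹ ≤ (1 + t y) * (1 + t y)⁻¹ := mul_le_mul_left le_add_self _
      _ = 1 := ENNReal.mul_inv_cancel (h1t0 y) (h1tT y)
  have hu_m : Measurable u := hs_m.mul (measurable_const.add hs_m).inv
  have hv_m : Measurable v := ht_m.mul (measurable_const.add ht_m).inv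
  -- the two coupling densities
  set g : X × Y → ℝ≥0∞ := fun z => φ z.1 * (ψ z.2 * f z) with hg_def
  set g' : X × Y → ℝ≥0∞ := fun z => φ' z.1 * (ψ' z.2 * f z) with hg'_def
  have hg_m : Measurable g := (hφ.comp measurable_fst).mul ((hψ.comp measurable_snd).mul hf)
  have hg'_m : Measurable g' := (hφ'.comp measurable_fst).mul ((hψ'.comp measurable_snd).mul hf)
  have hgT : ∀ z, g z ≠ ⊤ := fun z => mul_ne_top (hφt _) (mul_ne_top (hψt _) (hfnt z))
  have hg'T : ∀ z, g' z ≠ ⊤ := fun z => mul_ne_top (hφ't _) (mul_ne_top (hψ't _) (hfnt z))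
  -- order equivalences
  have st_iff : ∀ x y, s x ≤ t y ↔ g' (x, y) ≤ g (x, y) := by
    intro x y
    have h1 : s x ≤ t y ↔ φ' x * ψ' y ≤ ψ y * φ x :=
      hdiv_iff (hφ0 x) (hφt x) (hψ'0 y) (hψ't y)
    have h2 : g' (x, y) ≤ g (x, y) ↔ φ' x * ψ' y ≤ φ x * ψ y := by
      simp only [hg_def, hg'_def]
      rw [← mul_assoc, ← mul_assoc]
      exact ENNReal.mul_le_mul_iff_left (hfne _) (hfnt _)
    rw [h1, h2, mul_comm (ψ y) (φ x)]
  have ts_iff : ∀ x y, t y ≤ s x ↔ g (x, y) ≤ g' (x, y) := by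
    intro x y
    have h1 : t y ≤ s x ↔ ψ y * φ x ≤ φ' x * ψ' y :=
      hdiv_iff (hψ'0 y) (hψ't y) (hφ0 x) (hφt x)
    have h2 : g (x, y) ≤ g' (x, y) ↔ φ x * ψ y ≤ φ' x * ψ' y := by
      simp only [hg_def, hg'_def]
      rw [← mul_assoc, ← mul_assoc]
      exact ENNReal.mul_le_mul_iff_left (hfne _) (hfnt _)
    rw [h1, h2, mul_comm (ψ y) (φ x)]
  have uv_iff : ∀ x y, u x ≤ v y ↔ s x ≤ t y := by
    intro x y
    have h1 : u x ≤ v y ↔ s x * (1 + t y) ≤ t y * (1 + s x) :=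
      hdiv_iff (h1s0 x) (h1sT x) (h1t0 y) (h1tT y)
    rw [h1, mul_add, mul_add, mul_one, mul_one, mul_comm (t y) (s x)]
    exact ENNReal.add_le_add_iff_right (mul_ne_top (hsT x) (htT y))
  have vu_iff : ∀ x y, v y ≤ u x ↔ t y ≤ s x := by
    intro x y
    have h1 : v y ≤ u x ↔ t y * (1 + s x) ≤ s x * (1 + t y) :=
      hdiv_iff (h1t0 y) (h1tT y) (h1s0 x) (h1sT x)
    rw [h1, mul_add, mul_add, mul_one, mul_one, mul_comm (s x) (t y)]
    exact ENNReal.add_le_add_iff_right (mul_ne_top (htT y) (hsT x))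
  -- marginal integration lemmas
  have marg1 : ∀ (α : X → ℝ≥0∞) (β : Y → ℝ≥0∞), Measurable α → Measurable β →
      (∀ x, α x ≠ 0) → (∀ x, α x ≠ ⊤) →
      (∀ᵐ x ∂μ, ∫⁻ y, f (x, y) * β y ∂ν = (α x)⁻¹) →
      ∀ w : X → ℝ≥0∞, Measurable w →
      ∫⁻ z, w z.1 * (α z.1 * (β z.2 * f z)) ∂(μ.prod ν) = ∫⁻ x, w x ∂μ := by
    intro α β hα hβ hα0 hαT hsys w hw
    have hprodm : Measurable fun z : X × Y => w z.1 * (α z.1 * (β z.2 * f z)) :=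
      (hw.comp measurable_fst).mul ((hα.comp measurable_fst).mul
        ((hβ.comp measurable_snd).mul hf))
    rw [lintegral_prod _ hprodm.aemeasurable]
    refine lintegral_congr_ae ?_
    filter_upwards [hsys] with x hx
    have hmeas_y : Measurable fun y => β y * f (x, y) :=
      hβ.mul (hf.comp measurable_prodMk_left)
    calc ∫⁻ y, w x * (α x * (β y * f (x, y))) ∂ν
        = (w x * α x) * ∫⁻ y, β y * f (x, y) ∂ν := by
          rw [← lintegral_const_mul (w x * α x) hmeas_y]
          exact lintegral_congr fun y => by ring
      _ = (w x * α x) * (α x)⁻¹ := by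
          rw [← hx]
          congr 1
          exact lintegral_congr fun y => mul_comm _ _
      _ = w x := by rw [mul_assoc, ENNReal.mul_inv_cancel (hα0 x) (hαT x), mul_one]
  have marg2 : ∀ (α : X → ℝ≥0∞) (β : Y → ℝ≥0∞), Measurable α → Measurable β →
      (∀ y, β y ≠ 0) → (∀ y, β y ≠ ⊤) →
      (∀ᵐ y ∂ν, ∫⁻ x, f (x, y) * α x ∂μ = (β y)⁻¹) →
      ∀ w : Y → ℝ≥0∞, Measurable w →
      ∫⁻ z, w z.2 * (α z.1 * (β z.2 * f z)) ∂(μ.prod ν) = ∫⁻ y, w y ∂ν := by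
    intro α β hα hβ hβ0 hβT hsys w hw
    have hprodm : Measurable fun z : X × Y => w z.2 * (α z.1 * (β z.2 * f z)) :=
      (hw.comp measurable_snd).mul ((hα.comp measurable_fst).mul
        ((hβ.comp measurable_snd).mul hf))
    rw [lintegral_prod_symm _ hprodm.aemeasurable]
    refine lintegral_congr_ae ?_
    filter_upwards [hsys] with y hy
    have hmeas_x : Measurable fun x => α x * f (x, y) :=
      hα.mul (hf.comp measurable_prodMk_right)
    calc ∫⁻ x, w y * (α x * (β y * f (x, y))) ∂μ
        = (w y * β y) * ∫⁻ x, α x * f (x, y) ∂μ := by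
          rw [← lintegral_const_mul (w y * β y) hmeas_x]
          exact lintegral_congr fun x => by ring
      _ = (w y * β y) * (β y)⁻¹ := by
          rw [← hy]
          congr 1
          exact lintegral_congr fun x => mul_comm _ _
      _ = w y := by rw [mul_assoc, ENNReal.mul_inv_cancel (hβ0 y) (hβT y), mul_one]
  -- the comparison functions
  set F : X × Y → ℝ≥0∞ :=
    fun z => (u z.1 + (1 - v z.2)) * g' z + (v z.2 + (1 - u z.1)) * g z with hF_def
  set G : X × Y → ℝ≥0∞ :=
    fun z => (u z.1 + (1 - v z.2)) * g z + (v z.2 + (1 - u z.1)) * g' z with hG_def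
  have hF_m : Measurable F :=
    (((hu_m.comp measurable_fst).add (measurable_const.sub (hv_m.comp measurable_snd))).mul
      hg'_m).add
    (((hv_m.comp measurable_snd).add (measurable_const.sub (hu_m.comp measurable_fst))).mul hg_m)
  have hG_m : Measurable G :=
    (((hu_m.comp measurable_fst).add (measurable_const.sub (hv_m.comp measurable_snd))).mul
      hg_m).add
    (((hv_m.comp measurable_snd).add (measurable_const.sub (hu_m.comp measurable_fst))).mul hg'_m)
  have hAT : ∀ x y, u x + (1 - v y) ≠ ⊤ := fun x y =>
    add_ne_top.mpr ⟨ne_top_of_le_ne_top one_ne_top (hu1 x),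
      ne_top_of_le_ne_top one_ne_top tsub_le_self⟩
  have hBT : ∀ x y, v y + (1 - u x) ≠ ⊤ := fun x y =>
    add_ne_top.mpr ⟨ne_top_of_le_ne_top one_ne_top (hv1 y),
      ne_top_of_le_ne_top one_ne_top tsub_le_self⟩
  -- pointwise comparison
  have hpt : ∀ z : X × Y, G z ≤ F z ∧ (F z ≤ G z → s z.1 = t z.2) := by
    rintro ⟨x, y⟩
    simp only [hF_def, hG_def]
    rcases le_total (s x) (t y) with hcase | hcase
    · have huv : u x ≤ v y := (uv_iff x y).mpr hcase
      have hgg : g' (x, y) ≤ g (x, y) := (st_iff x y).mp hcase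
      have hAB : u x + (1 - v y) ≤ v y + (1 - u x) :=
        add_le_add huv (tsub_le_tsub_left huv 1)
      obtain ⟨h1, h2⟩ := rearr (hAT x y) (hBT x y) (hgT (x, y)) (hg'T (x, y)) hAB hgg
      refine ⟨h1, fun h => ?_⟩
      rcases h2 h with h | h
      · have huveq : u x = v y := uv_eq (hu1 x) (hv1 y) h
        exact le_antisymm hcase ((vu_iff x y).mp huveq.ge)
      · exact le_antisymm hcase ((ts_iff x y).mpr h.le)
    · have hvu : v y ≤ u x := (vu_iff x y).mpr hcase
      have hgg : g (x, y) ≤ g' (x, y) := (ts_iff x y).mp hcase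
      have hAB : v y + (1 - u x) ≤ u x + (1 - v y) :=
        add_le_add hvu (tsub_le_tsub_left hvu 1)
      obtain ⟨h1, h2⟩ := rearr (hBT x y) (hAT x y) (hg'T (x, y)) (hgT (x, y)) hAB hgg
      constructor
      · exact (add_comm _ _).trans_le (h1.trans_eq (add_comm _ _))
      · intro h
        have h' : (v y + (1 - u x)) * g (x, y) + (u x + (1 - v y)) * g' (x, y) ≤
            (v y + (1 - u x)) * g' (x, y) + (u x + (1 - v y)) * g (x, y) :=
          (add_comm _ _).trans_le (h.trans_eq (add_comm _ _))
        rcases h2 h' with h'' | h''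
        · have huveq : v y = u x := uv_eq (hv1 y) (hu1 x) h''
          exact le_antisymm ((uv_iff x y).mp huveq.ge) hcase
        · exact le_antisymm ((st_iff x y).mpr h''.le) hcase
  -- the eight marginal integrals
  have I1 : ∫⁻ z, u z.1 * g' z ∂(μ.prod ν) = ∫⁻ x, u x ∂μ := by
    simp only [hg'_def]; exact marg1 φ' ψ' hφ' hψ' hφ'0 hφ't hsys₁' u hu_m
  have I1' : ∫⁻ z, u z.1 * g z ∂(μ.prod ν) = ∫⁻ x, u x ∂μ := by
    simp only [hg_def]; exact marg1 φ ψ hφ hψ hφ0 hφt hsys₁ u hu_m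
  have I2 : ∫⁻ z, (1 - v z.2) * g' z ∂(μ.prod ν) = ∫⁻ y, 1 - v y ∂ν := by
    simp only [hg'_def]
    exact marg2 φ' ψ' hφ' hψ' hψ'0 hψ't hsys₂' (fun y => 1 - v y) (measurable_const.sub hv_m)
  have I2' : ∫⁻ z, (1 - v z.2) * g z ∂(μ.prod ν) = ∫⁻ y, 1 - v y ∂ν := by
    simp only [hg_def]
    exact marg2 φ ψ hφ hψ hψ0 hψt hsys₂ (fun y => 1 - v y) (measurable_const.sub hv_m)
  have I3 : ∫⁻ z, v z.2 * g z ∂(μ.prod ν) = ∫⁻ y, v y ∂ν := by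
    simp only [hg_def]; exact marg2 φ ψ hφ hψ hψ0 hψt hsys₂ v hv_m
  have I3' : ∫⁻ z, v z.2 * g' z ∂(μ.prod ν) = ∫⁻ y, v y ∂ν := by
    simp only [hg'_def]; exact marg2 φ' ψ' hφ' hψ' hψ'0 hψ't hsys₂' v hv_m
  have I4 : ∫⁻ z, (1 - u z.1) * g z ∂(μ.prod ν) = ∫⁻ x, 1 - u x ∂μ := by
    simp only [hg_def]
    exact marg1 φ ψ hφ hψ hφ0 hφt hsys₁ (fun x => 1 - u x) (measurable_const.sub hu_m)
  have I4' : ∫⁻ z, (1 - u z.1) * g' z ∂(μ.prod ν) = ∫⁻ x, 1 - u x ∂μ := by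
    simp only [hg'_def]
    exact marg1 φ' ψ' hφ' hψ' hφ'0 hφ't hsys₁' (fun x => 1 - u x) (measurable_const.sub hu_m)
  -- splitting the integrals of F and G
  have hFsplit : ∫⁻ z, F z ∂(μ.prod ν) =
      (∫⁻ x, u x ∂μ + ∫⁻ y, 1 - v y ∂ν) + (∫⁻ y, v y ∂ν + ∫⁻ x, 1 - u x ∂μ) := by
    have hm1 : Measurable fun z : X × Y => u z.1 * g' z :=
      (hu_m.comp measurable_fst).mul hg'_m
    have hm2 : Measurable fun z : X × Y => (1 - v z.2) * g' z :=
      (measurable_const.sub (hv_m.comp measurable_snd)).mul hg'_m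
    have hm3 : Measurable fun z : X × Y => v z.2 * g z :=
      (hv_m.comp measurable_snd).mul hg_m
    have hm12 : Measurable fun z : X × Y => u z.1 * g' z + (1 - v z.2) * g' z := hm1.add hm2
    simp only [hF_def, add_mul]
    rw [lintegral_add_left hm12, lintegral_add_left hm1, lintegral_add_left hm3,
      I1, I2, I3, I4]
  have hGsplit : ∫⁻ z, G z ∂(μ.prod ν) =
      (∫⁻ x, u x ∂μ + ∫⁻ y, 1 - v y ∂ν) + (∫⁻ y, v y ∂ν + ∫⁻ x, 1 - u x ∂μ) := by
    have hm1 : Measurable fun z : X × Y => u z.1 * g z :=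
      (hu_m.comp measurable_fst).mul hg_m
    have hm2 : Measurable fun z : X × Y => (1 - v z.2) * g z :=
      (measurable_const.sub (hv_m.comp measurable_snd)).mul hg_m
    have hm3 : Measurable fun z : X × Y => v z.2 * g' z :=
      (hv_m.comp measurable_snd).mul hg'_m
    have hm12 : Measurable fun z : X × Y => u z.1 * g z + (1 - v z.2) * g z := hm1.add hm2
    simp only [hG_def, add_mul]
    rw [lintegral_add_left hm12, lintegral_add_left hm1, lintegral_add_left hm3,
      I1', I2', I3', I4']
  have hFG : ∫⁻ z, F z ∂(μ.prod ν) = ∫⁻ z, G z ∂(μ.prod ν) := by rw [hFsplit, hGsplit]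
  -- finiteness of the integral of G
  have hbμ : ∀ (w : X → ℝ≥0∞), (∀ x, w x ≤ 1) → ∫⁻ x, w x ∂μ ≠ ⊤ := by
    intro w hw
    refine ne_top_of_le_ne_top one_ne_top ?_
    calc ∫⁻ x, w x ∂μ ≤ ∫⁻ _, 1 ∂μ := lintegral_mono hw
      _ = 1 := by simp
  have hbν : ∀ (w : Y → ℝ≥0∞), (∀ y, w y ≤ 1) → ∫⁻ y, w y ∂ν ≠ ⊤ := by
    intro w hw
    refine ne_top_of_le_ne_top one_ne_top ?_
    calc ∫⁻ y, w y ∂ν ≤ ∫⁻ _, 1 ∂ν := lintegral_mono hw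
      _ = 1 := by simp
  have hGfin : ∫⁻ z, G z ∂(μ.prod ν) ≠ ⊤ := by
    rw [hGsplit]
    exact add_ne_top.mpr ⟨add_ne_top.mpr ⟨hbμ u hu1, hbν _ fun y => tsub_le_self⟩,
      add_ne_top.mpr ⟨hbν v hv1, hbμ _ fun x => tsub_le_self⟩⟩
  -- conclude F = G almost everywhere
  have hzero : ∫⁻ z, F z - G z ∂(μ.prod ν) = 0 := by
    rw [lintegral_sub hG_m hGfin (ae_of_all _ fun z => (hpt z).1), hFG, tsub_self]
  have haeFG : ∀ᵐ z ∂(μ.prod ν), F z - G z = 0 :=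
    (lintegral_eq_zero_iff (hF_m.sub hG_m)).mp hzero
  have hst_ae : ∀ᵐ z ∂(μ.prod ν), s z.1 = t z.2 := by
    filter_upwards [haeFG] with z hz
    exact (hpt z).2 (tsub_eq_zero_iff_le.mp hz)
  -- extract the constant
  have h1 : ∀ᵐ x ∂μ, ∀ᵐ y ∂ν, s x = t y := Measure.ae_ae_of_ae_prod hst_ae
  obtain ⟨x₀, hx₀⟩ := h1.exists
  have hta : ∀ᵐ y ∂ν, t y = s x₀ := by filter_upwards [hx₀] with y hy; exact hy.symm
  refine ⟨s x₀, pos_iff_ne_zero.mpr (hs0 x₀), hsT x₀, ?_, ?_⟩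
  · have hsa : ∀ᵐ x ∂μ, s x = s x₀ := by
      filter_upwards [h1] with x hx
      obtain ⟨y, hy1, hy2⟩ := (hx.and hta).exists
      exact hy1.trans hy2
    filter_upwards [hsa] with x hx
    have hsx : s x * φ x = φ' x := by
      show φ' x * (φ x)⁻¹ * φ x = φ' x
      rw [mul_assoc, ENNReal.inv_mul_cancel (hφ0 x) (hφt x), mul_one]
    rw [← hsx, hx]
  · filter_upwards [hta] with y hy
    have h3 : t y * ψ' y = ψ y := by
      show ψ y * (ψ' y)⁻¹ * ψ' y = ψ y
      rw [mul_assoc, ENNReal.inv_mul_cancel (hψ'0 y) (hψ't y), mul_one]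
    rw [hy] at h3
    rw [← h3, ← mul_assoc, ENNReal.inv_mul_cancel (hs0 x₀) (hsT x₀), one_mul]
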